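/- With the notation of the birth-death chain with threshold ℓ (birth rate Λ, death rate μ̂ for states ≤ ℓ, death rate μ̂+μ_k for states > ℓ, with 0 < Λ < μ̂, μ_k > 0), the total stationary mass of the passive states, S(ℓ) := Σ_{i=0}^{ℓ} π^ℓ(i), is a strictly increasing function of the threshold ℓ ∈ ℕ. -/

import Mathlib

/-- The total stationary mass of the passive states {0,...,ℓ} of the
threshold-ℓ birth-death chain is strictly increasing in the threshold ℓ. -/
theorem stmt1 (Λ μhat μk : ℝ) (hΛ : 0 < Λ) (hΛμ : Λ < μhat) (hμk : 0 < μk)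
    (π : ℕ → ℕ → ℝ)
    (hform1 : ∀ ℓ i, i ≤ ℓ → π ℓ i = π ℓ 0 * (Λ / μhat) ^ i)
    (hform2 : ∀ ℓ i, ℓ < i → π ℓ i = π ℓ 0 * (Λ / μhat) ^ ℓ * (Λ / (μhat + μk)) ^ (i - ℓ))
    (hsum : ∀ ℓ, Summable (π ℓ)) (htot : ∀ ℓ, ∑' i, π ℓ i = 1) :
    StrictMono (fun ℓ => ∑ i ∈ Finset.range (ℓ + 1), π ℓ i) := by
  set r : ℝ := Λ / μhat with hrdef
  set q : ℝ := Λ / (μhat + μk) with hqdef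
  have hμ0 : 0 < μhat := hΛ.trans hΛμ
  have hr0 : 0 < r := div_pos hΛ hμ0
  have hr1 : r < 1 := (div_lt_one hμ0).2 hΛμ
  have hq0 : 0 < q := div_pos hΛ (by linarith)
  have hq1 : q < 1 := (div_lt_one (by linarith)).2 (by linarith)
  set c : ℝ := q / (1 - q) with hcdef
  have hc0 : 0 < c := div_pos hq0 (by linarith)
  set A : ℕ → ℝ := fun ℓ => ∑ i ∈ Finset.range (ℓ + 1), r ^ i with hAdef
  have hA0 : ∀ ℓ, 0 < A ℓ := fun ℓ =>
    Finset.sum_pos (fun i _ => pow_pos hr0 i) ⟨0, by simp⟩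
  -- key formula for the partial mass
  have key : ∀ ℓ, ∑ i ∈ Finset.range (ℓ + 1), π ℓ i = A ℓ / (A ℓ + c * r ^ ℓ) := by
    intro ℓ
    have hhead : ∑ i ∈ Finset.range (ℓ + 1), π ℓ i = π ℓ 0 * A ℓ := by
      rw [hAdef, Finset.mul_sum]
      exact Finset.sum_congr rfl fun i hi =>
        hform1 ℓ i (by simpa [Nat.lt_succ_iff] using Finset.mem_range.1 hi)
    have htail : ∑' i : ℕ, π ℓ (i + (ℓ + 1)) = π ℓ 0 * r ^ ℓ * c := by
      have h1 : ∀ i : ℕ, π ℓ (i + (ℓ + 1)) = (π ℓ 0 * r ^ ℓ * q) * q ^ i := by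
        intro i
        rw [hform2 ℓ (i + (ℓ + 1)) (by omega)]
        have h2 : i + (ℓ + 1) - ℓ = i + 1 := by omega
        rw [h2, pow_succ]
        ring
      rw [tsum_congr h1, tsum_mul_left, tsum_geometric_of_lt_one hq0.le hq1]
      rw [hcdef, div_eq_mul_inv]
      ring
    have hsplit := Summable.sum_add_tsum_nat_add (ℓ + 1) (hsum ℓ)
    rw [htot ℓ, hhead, htail] at hsplit
    have hden : 0 < A ℓ + c * r ^ ℓ := by positivity
    have hπ0 : π ℓ 0 * (A ℓ + c * r ^ ℓ) = 1 := by ring_nf; ring_nf at hsplit; linarith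
    rw [hhead, eq_div_iff hden.ne']
    linear_combination (A ℓ) * hπ0
  apply strictMono_nat_of_lt_succ
  intro ℓ
  simp only [key]
  have hA : 0 < A ℓ := hA0 ℓ
  have hAs : A (ℓ + 1) = A ℓ + r ^ (ℓ + 1) := by
    rw [hAdef]; simp [Finset.sum_range_succ]
  rw [hAs]
  set a := A ℓ
  set b := c * r ^ ℓ with hbdef
  have hb : 0 < b := by positivity
  have ht : (0:ℝ) < r ^ (ℓ + 1) := pow_pos hr0 _
  have hb' : c * r ^ (ℓ + 1) = r * b := by rw [hbdef, pow_succ]; ring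
  rw [hb']
  rw [div_lt_div_iff₀ (by positivity) (by positivity)]
  have har : a * r < a := by nlinarith
  nlinarith [mul_lt_mul_of_pos_left (show a * r < a + r ^ (ℓ + 1) by linarith) hb]
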